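/- Let α ≥ 0, s < 0, and A(α) = 2 - α + √(4-2α+α²). Then the function z(v,m) = v^{s/A(α)} m^{s/2} is convex on the domain {v > 0, m > 0} (its Hessian is positive semidefinite everywhere on this domain). -/

import Mathlib

noncomputable def Acoef (α : ℝ) : ℝ := 2 - α + Real.sqrt (4 - 2 * α + α ^ 2)

lemma Acoef_pos (α : ℝ) (hα : 0 ≤ α) : 0 < Acoef α := by
  unfold Acoef
  have hX : (0:ℝ) ≤ 4 - 2 * α + α ^ 2 := by nlinarith
  rcases le_or_gt α 2 with h | h
  · have : 0 < Real.sqrt (4 - 2 * α + α ^ 2) :=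
      Real.sqrt_pos.mpr (by nlinarith)
    linarith
  · have : α - 2 < Real.sqrt (4 - 2 * α + α ^ 2) := by
      rw [show α - 2 = Real.sqrt ((α - 2) ^ 2) by
        rw [Real.sqrt_sq (by linarith)]]
      exact Real.sqrt_lt_sqrt (by positivity) (by nlinarith)
    linarith

/-- for α ≥ 0 and s < 0, z(v,m) = v^{s/A(α)} m^{s/2} is convex on
the open quadrant {v > 0, m > 0}. -/
theorem z_convex (α s : ℝ) (hα : 0 ≤ α) (hs : s < 0) :
    ConvexOn ℝ {p : ℝ × ℝ | 0 < p.1 ∧ 0 < p.2}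
      (fun p : ℝ × ℝ => p.1 ^ (s / Acoef α) * p.2 ^ (s / 2)) := by
  set a := s / Acoef α with haa
  set b := s / 2 with hbb
  have ha : a < 0 := div_neg_of_neg_of_pos hs (Acoef_pos α hα)
  have hb : b < 0 := by rw [hbb]; linarith
  have hSconv : Convex ℝ {p : ℝ × ℝ | 0 < p.1 ∧ 0 < p.2} := by
    have h : Convex ℝ ((Set.Ioi (0:ℝ)) ×ˢ (Set.Ioi (0:ℝ))) :=
      (convex_Ioi (0:ℝ)).prod (convex_Ioi (0:ℝ))
    convert h using 1
    ext p; simp [Set.mem_prod]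
  have hlog := strictConcaveOn_log_Ioi.concaveOn
  refine ⟨hSconv, ?_⟩
  rintro x ⟨hx1, hx2⟩ y ⟨hy1, hy2⟩ c d hc hd hcd
  have hz1 : 0 < c * x.1 + d * y.1 := by
    rcases eq_or_lt_of_le hc with rfl | hc'
    · simp at hcd; subst hcd; simpa using hy1
    · have : 0 ≤ d * y.1 := mul_nonneg hd hy1.le
      nlinarith
  have hz2 : 0 < c * x.2 + d * y.2 := by
    rcases eq_or_lt_of_le hc with rfl | hc'
    · simp at hcd; subst hcd; simpa using hy2
    · have : 0 ≤ d * y.2 := mul_nonneg hd hy2.le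
      nlinarith
  have hp1 : (c • x + d • y).1 = c * x.1 + d * y.1 := rfl
  have hp2 : (c • x + d • y).2 = c * x.2 + d * y.2 := rfl
  -- concavity of log in each coordinate
  have hl1 : c • Real.log x.1 + d • Real.log y.1 ≤ Real.log (c * x.1 + d * y.1) := by
    have := hlog.2 (Set.mem_Ioi.mpr hx1) (Set.mem_Ioi.mpr hy1) hc hd hcd
    simpa using this
  have hl2 : c • Real.log x.2 + d • Real.log y.2 ≤ Real.log (c * x.2 + d * y.2) := by
    have := hlog.2 (Set.mem_Ioi.mpr hx2) (Set.mem_Ioi.mpr hy2) hc hd hcd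
    simpa using this
  -- linear function L p = a log p.1 + b log p.2
  have hL : a * Real.log (c * x.1 + d * y.1) + b * Real.log (c * x.2 + d * y.2) ≤
      c * (a * Real.log x.1 + b * Real.log x.2) +
      d * (a * Real.log y.1 + b * Real.log y.2) := by
    simp only [smul_eq_mul] at hl1 hl2
    nlinarith [mul_le_mul_of_nonpos_left hl1 ha.le, mul_le_mul_of_nonpos_left hl2 hb.le]
  -- rewrite values as exponentials
  have hrw : ∀ p : ℝ × ℝ, 0 < p.1 → 0 < p.2 →
      p.1 ^ a * p.2 ^ b = Real.exp (a * Real.log p.1 + b * Real.log p.2) := by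
    intro p h1 h2
    rw [Real.rpow_def_of_pos h1, Real.rpow_def_of_pos h2, ← Real.exp_add]
    ring_nf
  simp only [smul_eq_mul]
  rw [hrw x hx1 hx2, hrw y hy1 hy2, hrw _ (by rw [hp1]; exact hz1) (by rw [hp2]; exact hz2),
    hp1, hp2]
  calc Real.exp (a * Real.log (c * x.1 + d * y.1) + b * Real.log (c * x.2 + d * y.2))
      ≤ Real.exp (c * (a * Real.log x.1 + b * Real.log x.2) +
          d * (a * Real.log y.1 + b * Real.log y.2)) := Real.exp_le_exp.mpr hL
    _ ≤ c * Real.exp (a * Real.log x.1 + b * Real.log x.2) +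
          d * Real.exp (a * Real.log y.1 + b * Real.log y.2) := by
        have := convexOn_exp.2 (Set.mem_univ (a * Real.log x.1 + b * Real.log x.2))
          (Set.mem_univ (a * Real.log y.1 + b * Real.log y.2)) hc hd hcd
        simpa using this
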